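/- If ν* : S → ℝ is a global minimizer of L (i.e., L(ν*) ≤ L(ν) for all ν : S → ℝ), then ν* is also a global minimizer of 𝓛̃: 𝓛̃(ν*) ≤ 𝓛̃(ν) for all ν : S → ℝ. -/

import Mathlib

/-- If `ν*` is a global minimizer of `L`, then `ν*` is also a global minimizer of `𝓛̃`. -/
theorem stmt_11 {S X : Type*} [Fintype S] [Fintype X] [Nonempty S] [Nonempty X]
    (α γ : ℝ) (hα : 0 < α) (hγ0 : 0 < γ) (hγ1 : γ < 1)
    (c : X → ℝ) (hc : ∀ x, 0 ≤ c x) (hc0 : ∃ x₀, 0 < c x₀)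
    (st st' : X → S) (e₀ : X → ℝ)
    (p₀ : S → ℝ) (hp₀ : ∀ s, 0 ≤ p₀ s) (hp₀sum : ∑ s, p₀ s = 1)
    (ehat : (S → ℝ) → X → ℝ)
    (hehat : ∀ (ν : S → ℝ) (x : X), ehat ν x = e₀ x + γ * ν (st' x) - ν (st x))
    (Z : (S → ℝ) → ℝ)
    (hZ : ∀ ν : S → ℝ, Z ν = ∑ x, c x * Real.exp (ehat ν x / α))
    (L : (S → ℝ) → ℝ)
    (hL : ∀ ν : S → ℝ,
      L ν = (1 - γ) * ∑ s, p₀ s * ν s + α * ∑ x, c x * Real.exp (ehat ν x / α - 1))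
    (Ltil : (S → ℝ) → ℝ)
    (hLtil : ∀ ν : S → ℝ,
      Ltil ν = (1 - γ) * ∑ s, p₀ s * ν s + α * Real.log (Z ν))
    (νstar : S → ℝ) (hνstar : ∀ ν : S → ℝ, L νstar ≤ L ν) :
    ∀ ν : S → ℝ, Ltil νstar ≤ Ltil ν := by
  have hγ : (0:ℝ) < 1 - γ := by linarith
  have hZpos : ∀ μ : S → ℝ, 0 < Z μ := by
    intro μ
    rw [hZ]
    obtain ⟨x₀, hx₀⟩ := hc0
    apply Finset.sum_pos'
    · intro i _
      have := hc i
      positivity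
    · exact ⟨x₀, Finset.mem_univ _, by positivity⟩
  -- L in terms of Z
  have hLZ : ∀ μ : S → ℝ,
      L μ = (1 - γ) * ∑ s, p₀ s * μ s + α * (Z μ / Real.exp 1) := by
    intro μ
    rw [hL, hZ]
    congr 1
    rw [Finset.sum_div]
    congr 1
    apply Finset.sum_congr rfl
    intro x _
    rw [Real.exp_sub]
    ring
  -- Fact 1 : Ltil ≤ L
  have hle : ∀ μ : S → ℝ, Ltil μ ≤ L μ := by
    intro μ
    rw [hLtil, hLZ]
    have hZp := hZpos μ
    have hlog : Real.log (Z μ) ≤ Z μ / Real.exp 1 := by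
      have h := Real.log_le_sub_one_of_pos (show 0 < Z μ / Real.exp 1 by positivity)
      rw [Real.log_div (ne_of_gt hZp) (Real.exp_ne_zero 1), Real.log_exp] at h
      linarith
    nlinarith
  -- Fact 2 : Ltil ν = L (ν + C) for suitable C
  intro ν
  set C : ℝ := α * Real.log (Z ν / Real.exp 1) / (1 - γ) with hC
  set μ : S → ℝ := fun s => ν s + C with hμ
  have hZμ : Z μ = Real.exp (-(1 - γ) * C / α) * Z ν := by
    rw [hZ, hZ, Finset.mul_sum]
    apply Finset.sum_congr rfl
    intro x _
    rw [hehat, hehat]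
    simp only [hμ]
    have h : (e₀ x + γ * (ν (st' x) + C) - (ν (st x) + C)) / α
        = -(1 - γ) * C / α + (e₀ x + γ * ν (st' x) - ν (st x)) / α := by
      field_simp
      ring
    rw [h, Real.exp_add]
    ring
  have hCval : (1 - γ) * C = α * Real.log (Z ν) - α := by
    rw [hC]
    field_simp
    rw [Real.log_div (ne_of_gt (hZpos ν)) (Real.exp_ne_zero 1), Real.log_exp]
  have hLμ : L μ = Ltil ν := by
    rw [hLZ, hLtil, hZμ]
    have h1 : ∑ s, p₀ s * μ s = (∑ s, p₀ s * ν s) + C := by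
      simp only [hμ, mul_add, Finset.sum_add_distrib, ← Finset.sum_mul, hp₀sum, one_mul]
    have h2 : Real.exp (-(1 - γ) * C / α) = Real.exp 1 / Z ν := by
      have : -(1 - γ) * C / α = 1 - Real.log (Z ν) := by
        field_simp
        nlinarith [hCval]
      rw [this, Real.exp_sub, Real.exp_log (hZpos ν)]
    rw [h1, h2]
    have hZν := hZpos ν
    have he := Real.exp_ne_zero 1
    field_simp
    nlinarith [hCval]
  calc Ltil νstar ≤ L νstar := hle νstar
    _ ≤ L μ := hνstar μ
    _ = Ltil ν := hLμ
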